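/- Strong Kodaira decomposition from self-adjointness: suppose d is a closed densely defined operator on a Hilbert space H with d² = 0 (i.e. range(d) ⊆ ker(d)), δ = d* its adjoint, and suppose D = d + δ (with domain Dom(d) ∩ Dom(δ)) is self-adjoint with closed range. Then H decomposes orthogonally as H = (ker d ∩ ker δ) ⊕ closure(range d) ⊕ closure(range δ), and moreover range(d) and range(δ) are closed. -/

import Mathlib

local notation "⟪" x ", " y "⟫" => @inner ℂ _ _ x y

/-- The kernel of a partially defined operator, as a submodule of the ambient space. -/
noncomputable def LinearPMap.kerSubmodule {E F : Type*} [NormedAddCommGroup E]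
    [InnerProductSpace ℂ E] [NormedAddCommGroup F] [InnerProductSpace ℂ F]
    (T : E →ₗ.[ℂ] F) : Submodule ℂ E :=
  (LinearMap.ker T.toFun).map T.domain.subtype

/-- Strong Kodaira decomposition from self-adjointness: suppose `d` is a closed densely
defined operator on a Hilbert space `H` with `d² = 0` (range(d) ⊆ ker(d)), `δ = d*` its
adjoint, and suppose `D = d + δ` (with domain `Dom(d) ∩ Dom(δ)`) is self-adjoint with
closed range. Then `H` decomposes orthogonally as
`H = (ker d ∩ ker δ) ⊕ closure(range d) ⊕ closure(range δ)`, and moreover `range(d)` and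
`range(δ)` are closed. -/
theorem strong_kodaira_decomposition
    {E : Type*} [NormedAddCommGroup E] [InnerProductSpace ℂ E] [CompleteSpace E]
    (d : E →ₗ.[ℂ] E) (hdense : Dense (d.domain : Set E)) (hclosed : d.IsClosed)
    (hd2 : ∀ x : d.domain, ∃ h : d x ∈ d.domain, d ⟨d x, h⟩ = 0)
    (hD : IsSelfAdjoint (d + d.adjoint))
    (hDrange : IsClosed ((LinearMap.range (d + d.adjoint).toFun : Submodule ℂ E) : Set E)) :
    IsClosed ((LinearMap.range d.toFun : Submodule ℂ E) : Set E) ∧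
      IsClosed ((LinearMap.range d.adjoint.toFun : Submodule ℂ E) : Set E) ∧
      (∀ x ∈ LinearMap.range d.toFun, ∀ y ∈ LinearMap.range d.adjoint.toFun, ⟪x, y⟫ = 0) ∧
      (∀ x ∈ d.kerSubmodule ⊓ d.adjoint.kerSubmodule,
        ∀ y ∈ LinearMap.range d.toFun, ⟪x, y⟫ = 0) ∧
      (∀ x ∈ d.kerSubmodule ⊓ d.adjoint.kerSubmodule,
        ∀ y ∈ LinearMap.range d.adjoint.toFun, ⟪x, y⟫ = 0) ∧
      (d.kerSubmodule ⊓ d.adjoint.kerSubmodule) ⊔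
          LinearMap.range d.toFun ⊔ LinearMap.range d.adjoint.toFun = ⊤ := by
  classical
  set δ := d.adjoint with hδdef
  set D := d + δ with hDdef
  set R1 : Submodule ℂ E := LinearMap.range d.toFun with hR1def
  set R2 : Submodule ℂ E := LinearMap.range δ.toFun with hR2def
  set N : Submodule ℂ E := d.kerSubmodule ⊓ δ.kerSubmodule with hNdef
  have hDdense : Dense (D.domain : Set E) := hD.dense_domain
  have hadj : ∀ (x : δ.domain) (y : d.domain), ⟪δ x, (y : E)⟫ = ⟪(x : E), d y⟫ :=
    LinearPMap.adjoint_isFormalAdjoint hdense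
  have hadj' : ∀ (y : d.domain) (x : δ.domain), ⟪d y, (x : E)⟫ = ⟪(y : E), δ x⟫ :=
    (LinearPMap.adjoint_isFormalAdjoint hdense).symm
  -- orthogonality of ranges
  have horth : ∀ (u : d.domain) (v : δ.domain), ⟪d u, δ v⟫ = (0 : ℂ) := by
    intro u v
    obtain ⟨h, h0⟩ := hd2 u
    have h1 := hadj' ⟨d u, h⟩ v
    rw [h0] at h1
    simpa using h1.symm
  -- membership in N
  have hmemN : ∀ x : E, x ∈ N ↔
      ((∃ u : d.domain, d u = 0 ∧ (u : E) = x) ∧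
        (∃ v : δ.domain, δ v = 0 ∧ (v : E) = x)) := by
    intro x
    simp only [hNdef, Submodule.mem_inf, LinearPMap.kerSubmodule, Submodule.mem_map,
      LinearMap.mem_ker, Submodule.coe_subtype]
    rfl
  -- N ⊥ R1
  have hNR1 : ∀ x ∈ N, ∀ y ∈ R1, ⟪x, y⟫ = 0 := by
    intro x hx y hy
    obtain ⟨-, v, hv0, hvx⟩ := (hmemN x).mp hx
    obtain ⟨u, rfl⟩ := hy
    have := hadj' u v
    rw [hv0, inner_zero_right, hvx] at this
    rw [inner_eq_zero_symm]
    exact this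
  -- N ⊥ R2
  have hNR2 : ∀ x ∈ N, ∀ y ∈ R2, ⟪x, y⟫ = 0 := by
    intro x hx y hy
    obtain ⟨⟨v, hv0, hvx⟩, -⟩ := (hmemN x).mp hx
    obtain ⟨u, rfl⟩ := hy
    have := hadj u v
    rw [hv0, inner_zero_right, hvx] at this
    rw [inner_eq_zero_symm]
    exact this
  -- kernel of D
  have hkerD : ∀ (z : D.domain), D z = 0 → (z : E) ∈ N := by
    intro z hz
    have hz1 : (z : E) ∈ d.domain := z.2.1
    have hz2 : (z : E) ∈ δ.domain := z.2.2
    have hzz : d ⟨(z : E), hz1⟩ + δ ⟨(z : E), hz2⟩ = 0 := hz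
    have ho : ⟪d ⟨(z : E), hz1⟩, δ ⟨(z : E), hz2⟩⟫ = 0 := horth _ _
    have hself : ⟪d ⟨(z : E), hz1⟩, d ⟨(z : E), hz1⟩⟫ = 0 := by
      have h1 : ⟪d ⟨(z : E), hz1⟩, d ⟨(z : E), hz1⟩ + δ ⟨(z : E), hz2⟩⟫ = 0 := by
        rw [hzz, inner_zero_right]
      rwa [inner_add_right, ho, add_zero] at h1
    have ha : d ⟨(z : E), hz1⟩ = 0 := inner_self_eq_zero.mp hself
    have hb : δ ⟨(z : E), hz2⟩ = 0 := by rwa [ha, zero_add] at hzz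
    exact (hmemN z).mpr ⟨⟨⟨z, hz1⟩, ha, rfl⟩, ⟨⟨z, hz2⟩, hb, rfl⟩⟩
  -- (range D)ᗮ ≤ N
  have hperpD : (LinearMap.range D.toFun)ᗮ ≤ N := by
    intro x hx
    rw [Submodule.mem_orthogonal] at hx
    have hx' : ∀ z : D.domain, ⟪x, D z⟫ = 0 := fun z => by
      rw [inner_eq_zero_symm]; exact hx (D z) ⟨z, rfl⟩
    have hxdom : x ∈ D.adjoint.domain :=
      LinearPMap.mem_adjoint_domain_of_exists x
        ⟨0, fun z => by rw [inner_zero_left, hx' z]⟩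
    have hval : D.adjoint ⟨x, hxdom⟩ = 0 :=
      LinearPMap.adjoint_apply_eq hDdense _ (fun z => by rw [inner_zero_left, hx' z])
    have hle : D.adjoint ≤ D := le_of_eq (LinearPMap.isSelfAdjoint_def.mp hD)
    have hxdom' : x ∈ D.domain := hle.1 hxdom
    have hveq : D.adjoint ⟨x, hxdom⟩ = D ⟨x, hxdom'⟩ := hle.2 rfl
    exact hkerD ⟨x, hxdom'⟩ (hveq ▸ hval)
  -- range D ≤ R1 ⊔ R2
  have hrangeD : LinearMap.range D.toFun ≤ R1 ⊔ R2 := by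
    rintro _ ⟨z, rfl⟩
    have heq : D.toFun z = d ⟨(z : E), z.2.1⟩ + δ ⟨(z : E), z.2.2⟩ := rfl
    rw [heq]
    exact Submodule.add_mem _ (Submodule.mem_sup_left ⟨_, rfl⟩)
      (Submodule.mem_sup_right ⟨_, rfl⟩)
  -- the decomposition
  haveI : CompleteSpace (LinearMap.range D.toFun) := hDrange.completeSpace_coe
  have hsupD : LinearMap.range D.toFun ⊔ (LinearMap.range D.toFun)ᗮ = ⊤ :=
    Submodule.sup_orthogonal_of_hasOrthogonalProjection
  have htop : N ⊔ R1 ⊔ R2 = ⊤ := by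
    rw [eq_top_iff, ← hsupD]
    apply sup_le
    · exact le_trans hrangeD
        (sup_le (le_sup_of_le_left le_sup_right) le_sup_right)
    · exact le_trans hperpD (le_sup_of_le_left le_sup_left)
  -- perp inclusions
  have hR2perpR1 : R2 ≤ R1ᗮ := by
    rintro _ ⟨v, rfl⟩
    rw [Submodule.mem_orthogonal]
    rintro _ ⟨u, rfl⟩
    exact horth u v
  have hR1perpR2 : R1 ≤ R2ᗮ := by
    rintro _ ⟨u, rfl⟩
    rw [Submodule.mem_orthogonal]
    rintro _ ⟨v, rfl⟩
    rw [inner_eq_zero_symm]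
    exact horth u v
  have hR1perpN : R1 ≤ Nᗮ := by
    intro y hy
    rw [Submodule.mem_orthogonal]
    intro n hn
    exact hNR1 n hn y hy
  have hR2perpN : R2 ≤ Nᗮ := by
    intro y hy
    rw [Submodule.mem_orthogonal]
    intro n hn
    exact hNR2 n hn y hy
  -- Nᗮ ≤ range D
  have hNperp : Nᗮ ≤ LinearMap.range D.toFun := by
    have h1 : Nᗮ ≤ ((LinearMap.range D.toFun)ᗮ)ᗮ := Submodule.orthogonal_le hperpD
    rwa [Submodule.orthogonal_orthogonal_eq_closure,
      hDrange.submodule_topologicalClosure_eq] at h1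
  -- closedness of R1
  have hR1closed : IsClosed (R1 : Set E) := by
    apply isClosed_of_closure_subset
    rw [← Submodule.topologicalClosure_coe]
    intro y hy
    have hy' : y ∈ R1.topologicalClosure := hy
    have hyN : y ∈ Nᗮ :=
      R1.topologicalClosure_minimal hR1perpN N.isClosed_orthogonal hy'
    obtain ⟨z, hz⟩ := hNperp hyN
    have hzeq : d ⟨(z : E), z.2.1⟩ + δ ⟨(z : E), z.2.2⟩ = y := hz
    have hbmem : δ ⟨(z : E), z.2.2⟩ ∈ R1.topologicalClosure := by
      have hb : δ ⟨(z : E), z.2.2⟩ = y - d ⟨(z : E), z.2.1⟩ := by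
        rw [← hzeq]; abel
      rw [hb]
      exact Submodule.sub_mem _ hy' (R1.le_topologicalClosure ⟨_, rfl⟩)
    have hbperp : δ ⟨(z : E), z.2.2⟩ ∈ R1ᗮ := hR2perpR1 ⟨_, rfl⟩
    have hb0 : δ ⟨(z : E), z.2.2⟩ = 0 := by
      have h2 : δ ⟨(z : E), z.2.2⟩ ∈ (R1ᗮ)ᗮ := by
        rw [Submodule.orthogonal_orthogonal_eq_closure]; exact hbmem
      exact inner_self_eq_zero.mp
        ((Submodule.mem_orthogonal _ _).mp h2 _ hbperp)
    refine ⟨⟨(z : E), z.2.1⟩, ?_⟩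
    show d ⟨(z : E), z.2.1⟩ = y
    rw [← hzeq, hb0, add_zero]
  -- closedness of R2
  have hR2closed : IsClosed (R2 : Set E) := by
    apply isClosed_of_closure_subset
    rw [← Submodule.topologicalClosure_coe]
    intro y hy
    have hy' : y ∈ R2.topologicalClosure := hy
    have hyN : y ∈ Nᗮ :=
      R2.topologicalClosure_minimal hR2perpN N.isClosed_orthogonal hy'
    obtain ⟨z, hz⟩ := hNperp hyN
    have hzeq : d ⟨(z : E), z.2.1⟩ + δ ⟨(z : E), z.2.2⟩ = y := hz
    have hamem : d ⟨(z : E), z.2.1⟩ ∈ R2.topologicalClosure := by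
      have ha : d ⟨(z : E), z.2.1⟩ = y - δ ⟨(z : E), z.2.2⟩ := by
        rw [← hzeq]; abel
      rw [ha]
      exact Submodule.sub_mem _ hy' (R2.le_topologicalClosure ⟨_, rfl⟩)
    have haperp : d ⟨(z : E), z.2.1⟩ ∈ R2ᗮ := hR1perpR2 ⟨_, rfl⟩
    have ha0 : d ⟨(z : E), z.2.1⟩ = 0 := by
      have h2 : d ⟨(z : E), z.2.1⟩ ∈ (R2ᗮ)ᗮ := by
        rw [Submodule.orthogonal_orthogonal_eq_closure]; exact hamem
      exact inner_self_eq_zero.mp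
        ((Submodule.mem_orthogonal _ _).mp h2 _ haperp)
    refine ⟨⟨(z : E), z.2.2⟩, ?_⟩
    show δ ⟨(z : E), z.2.2⟩ = y
    rw [← hzeq, ha0, zero_add]
  refine ⟨hR1closed, hR2closed, ?_, hNR1, hNR2, htop⟩
  rintro _ ⟨u, rfl⟩ _ ⟨v, rfl⟩
  exact horth u v
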